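/- Let a, c ∈ ℝⁿ be nonzero and linearly independent, let b_a, b_c ∈ ℝ, x ∈ ℝⁿ with ⟨c, x⟩ = b_c. With β, w, x⁺ defined as in the inertial Kaczmarz update (β = ⟨a,c⟩(⟨a,x⟩−b_a)/(‖a‖²‖c‖²−⟨a,c⟩²), w = x + βc, x⁺ = w − ((⟨a,w⟩−b_a)/‖a‖²)a), then ⟨a, x⁺⟩ = b_a and ⟨c, x⁺⟩ = b_c simultaneously, i.e., x⁺ ∈ H_a ∩ H_c. -/

import Mathlib

open RealInnerProductSpace

/-- The inertial Kaczmarz update lands on the intersection of the two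
hyperplanes `H_a = {⟨a,·⟩ = b_a}` and `H_c = {⟨c,·⟩ = b_c}`. -/
theorem stmt_3 {n : ℕ} (a c : EuclideanSpace ℝ (Fin n)) (ha : a ≠ 0) (hc : c ≠ 0)
    (hind : LinearIndependent ℝ ![a, c]) (ba bc : ℝ)
    (x : EuclideanSpace ℝ (Fin n)) (hx : ⟪c, x⟫ = bc) :
    let β : ℝ := ⟪a, c⟫ * (⟪a, x⟫ - ba) / (‖a‖ ^ 2 * ‖c‖ ^ 2 - ⟪a, c⟫ ^ 2)
    let w := x + β • c
    let xp := w - ((⟪a, w⟫ - ba) / ‖a‖ ^ 2) • a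
    ⟪a, xp⟫ = ba ∧ ⟪c, xp⟫ = bc := by
  have hna : ‖a‖ ≠ 0 := norm_ne_zero_iff.mpr ha
  have hnc : ‖c‖ ≠ 0 := norm_ne_zero_iff.mpr hc
  have hpair := LinearIndependent.pair_iff.mp hind
  have h1 : ⟪a, c⟫ < ‖a‖ * ‖c‖ := by
    rw [inner_lt_norm_mul_iff_real]
    intro h
    have := hpair (‖c‖) (-‖a‖) (by rw [h]; simp)
    exact hnc this.1
  have h2 : -(‖a‖ * ‖c‖) < ⟪a, c⟫ := by
    have : ⟪a, -c⟫ < ‖a‖ * ‖-c‖ := by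
      rw [inner_lt_norm_mul_iff_real]
      intro h
      have := hpair (‖-c‖) (‖a‖) (by rw [h, smul_neg, neg_add_cancel])
      exact hna this.2
    simp only [inner_neg_right, norm_neg] at this
    linarith
  have hD : ‖a‖ ^ 2 * ‖c‖ ^ 2 - ⟪a, c⟫ ^ 2 ≠ 0 := by
    have : ⟪a, c⟫ ^ 2 < (‖a‖ * ‖c‖) ^ 2 := sq_lt_sq' h2 h1
    nlinarith
  intro β w xp
  have hβ : β = ⟪a, c⟫ * (⟪a, x⟫ - ba) / (‖a‖ ^ 2 * ‖c‖ ^ 2 - ⟪a, c⟫ ^ 2) := rfl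
  have hw_a : ⟪a, w⟫ = ⟪a, x⟫ + β * ⟪a, c⟫ := by
    show ⟪a, x + β • c⟫ = _
    rw [inner_add_right, real_inner_smul_right]
  have hw_c : ⟪c, w⟫ = bc + β * ‖c‖ ^ 2 := by
    show ⟪c, x + β • c⟫ = _
    rw [inner_add_right, real_inner_smul_right, real_inner_self_eq_norm_sq, hx]
  have hca : ⟪c, a⟫ = ⟪a, c⟫ := (real_inner_comm c a).symm
  constructor
  · have h3 : ⟪a, xp⟫ = ⟪a, w⟫ - ((⟪a, w⟫ - ba) / ‖a‖ ^ 2) * ‖a‖ ^ 2 := by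
      show ⟪a, w - _ • a⟫ = _
      rw [inner_sub_right, real_inner_smul_right, real_inner_self_eq_norm_sq]
    rw [h3]
    field_simp
    ring
  · have h3 : ⟪c, xp⟫ = ⟪c, w⟫ - ((⟪a, w⟫ - ba) / ‖a‖ ^ 2) * ⟪a, c⟫ := by
      show ⟪c, w - _ • a⟫ = _
      rw [inner_sub_right, real_inner_smul_right, hca]
    rw [h3, hw_c, hw_a, hβ]
    generalize ⟪a, c⟫ = p at hD ⊢
    generalize ⟪a, x⟫ = q
    field_simp
    ring
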